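/- Under the Markov chains U_1–Y_1–(X,U_2) and (U_1,Y_1)–X–U_2 (discrete or jointly Gaussian), I(U_1;Y_1|U_2) = h(X|U_2) − h(X|U_1,U_2) + I(U_1;Y_1|X). -/

import Mathlib

open Real Finset

/-- Probability that the random variable `X` takes value `a`, under pmf `p` on `Ω`. -/
noncomputable def distOf {Ω A : Type*} [Fintype Ω] [DecidableEq A] (p : Ω → ℝ) (X : Ω → A)
    (a : A) : ℝ :=
  ∑ ω ∈ Finset.univ.filter (fun ω => X ω = a), p ω

/-- Shannon entropy (natural log) of a discrete random variable. -/
noncomputable def Hd {Ω A : Type*} [Fintype Ω] [Fintype A] [DecidableEq A]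
    (p : Ω → ℝ) (X : Ω → A) : ℝ :=
  -∑ a : A, distOf p X a * Real.log (distOf p X a)

/-- Conditional entropy H(X|Y). -/
noncomputable def CHd {Ω A B : Type*} [Fintype Ω] [Fintype A] [DecidableEq A]
    [Fintype B] [DecidableEq B] (p : Ω → ℝ) (X : Ω → A) (Y : Ω → B) : ℝ :=
  Hd p (fun ω => (X ω, Y ω)) - Hd p Y

/-- Mutual information I(X;Y). -/
noncomputable def MId {Ω A B : Type*} [Fintype Ω] [Fintype A] [DecidableEq A]
    [Fintype B] [DecidableEq B] (p : Ω → ℝ) (X : Ω → A) (Y : Ω → B) : ℝ :=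
  Hd p X + Hd p Y - Hd p (fun ω => (X ω, Y ω))

/-- Conditional mutual information I(X;Y|Z). -/
noncomputable def CMId {Ω A B C : Type*} [Fintype Ω] [Fintype A] [DecidableEq A]
    [Fintype B] [DecidableEq B] [Fintype C] [DecidableEq C]
    (p : Ω → ℝ) (X : Ω → A) (Y : Ω → B) (Z : Ω → C) : ℝ :=
  Hd p (fun ω => (X ω, Z ω)) + Hd p (fun ω => (Y ω, Z ω))
    - Hd p (fun ω => (X ω, Y ω, Z ω)) - Hd p Z

section aux
variable {Ω A B : Type*} [Fintype Ω]

lemma distOf_nonneg [DecidableEq A] (p : Ω → ℝ) (hp : ∀ ω, 0 ≤ p ω) (X : Ω → A) (a : A) :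
    0 ≤ distOf p X a :=
  Finset.sum_nonneg fun ω _ => hp ω

lemma distOf_map [DecidableEq A] [DecidableEq B] [Fintype A] (p : Ω → ℝ) (T : Ω → A) (f : A → B) (b : B) :
    distOf p (fun ω => f (T ω)) b = ∑ a ∈ Finset.univ.filter (fun a => f a = b), distOf p T a := by
  unfold distOf
  rw [Finset.sum_fiberwise_eq_sum_filter]
  congr 1
  ext ω
  simp

lemma sum_distOf [DecidableEq A] [Fintype A] (p : Ω → ℝ) (T : Ω → A) :
    ∑ a : A, distOf p T a = ∑ ω, p ω := by
  unfold distOf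
  exact Finset.sum_fiberwise_of_maps_to (fun ω _ => Finset.mem_univ (T ω)) p

lemma sum_distOf_mul [DecidableEq A] [DecidableEq B] [Fintype A] [Fintype B]
    (p : Ω → ℝ) (T : Ω → A) (f : A → B) (g : B → ℝ) :
    ∑ b : B, distOf p (fun ω => f (T ω)) b * g b = ∑ a : A, distOf p T a * g (f a) := by
  have h : ∀ b : B, distOf p (fun ω => f (T ω)) b * g b
      = ∑ a ∈ Finset.univ.filter (fun a => f a = b), distOf p T a * g (f a) := by
    intro b
    rw [distOf_map, Finset.sum_mul]
    exact Finset.sum_congr rfl fun a ha => by rw [(Finset.mem_filter.mp ha).2]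
  simp only [h]
  exact Finset.sum_fiberwise_of_maps_to (fun a _ => Finset.mem_univ (f a)) _

lemma Hd_map [DecidableEq A] [DecidableEq B] [Fintype A] [Fintype B]
    (p : Ω → ℝ) (T : Ω → A) (f : A → B) :
    Hd p (fun ω => f (T ω))
      = -∑ a : A, distOf p T a * Real.log (distOf p (fun ω => f (T ω)) (f a)) := by
  unfold Hd
  rw [sum_distOf_mul p T f (fun b => Real.log (distOf p (fun ω => f (T ω)) b))]

lemma distOf_le_map [DecidableEq A] [DecidableEq B] [Fintype A]
    (p : Ω → ℝ) (hp : ∀ ω, 0 ≤ p ω) (T : Ω → A) (f : A → B) (a : A) :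
    distOf p T a ≤ distOf p (fun ω => f (T ω)) (f a) := by
  rw [distOf_map p T f (f a)]
  exact Finset.single_le_sum (fun i _ => distOf_nonneg p hp T i) (by simp)

end aux

section nonneg
variable {Ω A B C : Type*} [Fintype Ω] [Fintype A] [DecidableEq A]
    [Fintype B] [DecidableEq B] [Fintype C] [DecidableEq C]

lemma CMId_nonneg (p : Ω → ℝ) (hp : ∀ ω, 0 ≤ p ω) (hp1 : ∑ ω, p ω = 1)
    (X : Ω → A) (Y : Ω → B) (Z : Ω → C) : 0 ≤ CMId p X Y Z := by
  classical
  set T : Ω → A × B × C := fun ω => (X ω, Y ω, Z ω) with hT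
  have hq0 : ∀ t, 0 ≤ distOf p T t := distOf_nonneg p hp T
  set q : A × B × C → ℝ := distOf p T with hq
  set qXZ : A × C → ℝ := distOf p (fun ω => (X ω, Z ω)) with hqXZ
  set qYZ : B × C → ℝ := distOf p (fun ω => (Y ω, Z ω)) with hqYZ
  set qZ : C → ℝ := distOf p Z with hqZ
  have e1 : Hd p (fun ω => (X ω, Z ω)) = -∑ t : A × B × C, q t * Real.log (qXZ (t.1, t.2.2)) :=
    Hd_map p T (fun t => (t.1, t.2.2))
  have e2 : Hd p (fun ω => (Y ω, Z ω)) = -∑ t : A × B × C, q t * Real.log (qYZ (t.2.1, t.2.2)) :=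
    Hd_map p T (fun t => (t.2.1, t.2.2))
  have e3 : Hd p (fun ω => (X ω, Y ω, Z ω)) = -∑ t : A × B × C, q t * Real.log (q t) :=
    Hd_map p T id
  have e4 : Hd p Z = -∑ t : A × B × C, q t * Real.log (qZ t.2.2) :=
    Hd_map p T (fun t => t.2.2)
  have key : CMId p X Y Z = ∑ t : A × B × C, q t * (Real.log (q t) + Real.log (qZ t.2.2)
      - Real.log (qXZ (t.1, t.2.2)) - Real.log (qYZ (t.2.1, t.2.2))) := by
    simp only [CMId, e1, e2, e3, e4, mul_add, mul_sub, Finset.sum_add_distrib,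
      Finset.sum_sub_distrib]
    ring
  set r : A × B × C → ℝ := fun t =>
    if 0 < qZ t.2.2 then qXZ (t.1, t.2.2) * qYZ (t.2.1, t.2.2) / qZ t.2.2 else 0 with hr
  have hr0 : ∀ t, 0 ≤ r t := by
    intro t
    rw [hr]
    dsimp only
    split
    · exact div_nonneg (mul_nonneg (distOf_nonneg p hp _ _) (distOf_nonneg p hp _ _))
        (le_of_lt ‹_›)
    · exact le_rfl
  have hmargXZ : ∀ t : A × B × C, q t ≤ qXZ (t.1, t.2.2) := fun t =>
    distOf_le_map p hp T (fun t => (t.1, t.2.2)) t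
  have hmargYZ : ∀ t : A × B × C, q t ≤ qYZ (t.2.1, t.2.2) := fun t =>
    distOf_le_map p hp T (fun t => (t.2.1, t.2.2)) t
  have hmargZ : ∀ t : A × B × C, q t ≤ qZ t.2.2 := fun t =>
    distOf_le_map p hp T (fun t => t.2.2) t
  have hpt : ∀ t : A × B × C, q t - r t ≤ q t * (Real.log (q t) + Real.log (qZ t.2.2)
      - Real.log (qXZ (t.1, t.2.2)) - Real.log (qYZ (t.2.1, t.2.2))) := by
    intro t
    rcases eq_or_lt_of_le (hq0 t) with h0 | h0
    · rw [← h0]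
      simpa using hr0 t
    · have hZ : 0 < qZ t.2.2 := lt_of_lt_of_le h0 (hmargZ t)
      have hX : 0 < qXZ (t.1, t.2.2) := lt_of_lt_of_le h0 (hmargXZ t)
      have hY : 0 < qYZ (t.2.1, t.2.2) := lt_of_lt_of_le h0 (hmargYZ t)
      have hrt : r t = qXZ (t.1, t.2.2) * qYZ (t.2.1, t.2.2) / qZ t.2.2 := by
        rw [hr]; dsimp only; rw [if_pos hZ]
      set x := qXZ (t.1, t.2.2) * qYZ (t.2.1, t.2.2) / (q t * qZ t.2.2) with hx
      have hxpos : 0 < x := div_pos (mul_pos hX hY) (mul_pos h0 hZ)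
      have hlog : Real.log x ≤ x - 1 := Real.log_le_sub_one_of_pos hxpos
      have hlogx : Real.log x = Real.log (qXZ (t.1, t.2.2)) + Real.log (qYZ (t.2.1, t.2.2))
          - (Real.log (q t) + Real.log (qZ t.2.2)) := by
        rw [hx, Real.log_div (by positivity) (by positivity), Real.log_mul hX.ne' hY.ne',
          Real.log_mul h0.ne' hZ.ne']
      have hqx : q t * x = r t := by
        rw [hx, hrt]; field_simp
      have h1 := mul_le_mul_of_nonneg_left hlog h0.le
      rw [hlogx] at h1
      have h2 : q t * (x - 1) = r t - q t := by rw [mul_sub, hqx, mul_one]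
      rw [h2] at h1
      nlinarith [h1]
  have hmXZ : ∀ c : C, ∑ a : A, qXZ (a, c) = qZ c := by
    intro c
    have h2 : qZ c = ∑ w ∈ Finset.univ.filter (fun w : A × C => w.2 = c), qXZ w :=
      distOf_map p (fun ω => (X ω, Z ω)) Prod.snd c
    rw [h2, Finset.sum_filter, Fintype.sum_prod_type]
    simp [Finset.sum_ite_eq']
  have hmYZ : ∀ c : C, ∑ b : B, qYZ (b, c) = qZ c := by
    intro c
    have h2 : qZ c = ∑ w ∈ Finset.univ.filter (fun w : B × C => w.2 = c), qYZ w :=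
      distOf_map p (fun ω => (Y ω, Z ω)) Prod.snd c
    rw [h2, Finset.sum_filter, Fintype.sum_prod_type]
    simp [Finset.sum_ite_eq']
  have hsplit : ∑ t : A × B × C, r t = ∑ c : C, if 0 < qZ c then qZ c else 0 := by
    rw [Fintype.sum_prod_type, Finset.sum_comm]
    rw [show (∑ y : B × C, ∑ a : A, r (a, y)) = ∑ b : B, ∑ c : C, ∑ a : A, r (a, (b, c)) from
      Fintype.sum_prod_type _]
    rw [Finset.sum_comm]
    apply Finset.sum_congr rfl
    intro c _
    by_cases hc : 0 < qZ c
    · rw [if_pos hc]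
      have hinner : ∀ b : B, ∑ a : A, r (a, (b, c)) = qYZ (b, c) := by
        intro b
        have hre : ∀ a : A, r (a, (b, c)) = qXZ (a, c) * qYZ (b, c) / qZ c := by
          intro a; rw [hr]; dsimp only; rw [if_pos hc]
        calc ∑ a : A, r (a, (b, c)) = ∑ a : A, qXZ (a, c) * qYZ (b, c) / qZ c :=
              Finset.sum_congr rfl fun a _ => hre a
          _ = (∑ a : A, qXZ (a, c)) * qYZ (b, c) / qZ c := by
              rw [Finset.sum_mul, Finset.sum_div]
          _ = qZ c * qYZ (b, c) / qZ c := by rw [hmXZ c]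
          _ = qYZ (b, c) := by rw [mul_comm, mul_div_assoc, div_self hc.ne', mul_one]
      calc ∑ b : B, ∑ a : A, r (a, (b, c)) = ∑ b : B, qYZ (b, c) :=
            Finset.sum_congr rfl fun b _ => hinner b
        _ = qZ c := hmYZ c
    · rw [if_neg hc]
      apply Finset.sum_eq_zero
      intro b _
      apply Finset.sum_eq_zero
      intro a _
      rw [hr]; dsimp only; rw [if_neg hc]
  have hsumq : ∑ t : A × B × C, q t = 1 := (sum_distOf p T).trans hp1
  have hsumr : ∑ t : A × B × C, r t ≤ 1 := by
    rw [hsplit]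
    have h1 : ∑ c : C, (if 0 < qZ c then qZ c else 0) ≤ ∑ c : C, qZ c := by
      apply Finset.sum_le_sum
      intro c _
      split
      · exact le_rfl
      · exact distOf_nonneg p hp Z c
    have h2 : ∑ c : C, qZ c = 1 := (sum_distOf p Z).trans hp1
    linarith
  have hfinal : ∑ t : A × B × C, (q t - r t) ≤ CMId p X Y Z := by
    rw [key]
    exact Finset.sum_le_sum fun t _ => hpt t
  rw [Finset.sum_sub_distrib] at hfinal
  linarith
end nonneg
section perm
variable {Ω A B : Type*} [Fintype Ω]

lemma Hd_perm [DecidableEq A] [DecidableEq B] [Fintype A] [Fintype B]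
    (p : Ω → ℝ) (X : Ω → A) (Y : Ω → B) (e : A → B) (g : B → A) (hge : ∀ a, g (e a) = a)
    (h : ∀ ω, Y ω = e (X ω)) : Hd p Y = Hd p X := by
  have hY : Y = fun ω => e (X ω) := funext h
  have he : Function.Injective e := Function.LeftInverse.injective hge
  subst hY
  rw [Hd_map p X e]
  unfold Hd
  congr 1
  apply Finset.sum_congr rfl
  intro a _
  have : distOf p (fun ω => e (X ω)) (e a) = distOf p X a := by
    unfold distOf
    congr 1
    ext ω
    simp [he.eq_iff]
  rw [this]

end perm

theorem stmt14 {Ω A B C D : Type*} [Fintype Ω]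
    [Fintype A] [DecidableEq A] [Fintype B] [DecidableEq B] [Fintype C] [DecidableEq C]
    [Fintype D] [DecidableEq D]
    (p : Ω → ℝ) (hp : ∀ ω, 0 ≤ p ω) (hp1 : ∑ ω, p ω = 1)
    (U1 : Ω → A) (Y1 : Ω → B) (X : Ω → C) (U2 : Ω → D)
    -- Markov chains U1 - Y1 - (X,U2) and (U1,Y1) - X - U2
    (hM1 : CMId p U1 (fun ω => (X ω, U2 ω)) Y1 = 0)
    (hM2 : CMId p (fun ω => (U1 ω, Y1 ω)) U2 X = 0) :
    CMId p U1 Y1 U2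
      = CHd p X U2 - CHd p X (fun ω => (U1 ω, U2 ω)) + CMId p U1 Y1 X := by
  classical
  have R1 : Hd p (fun ω => (X ω, (U1 ω, U2 ω))) = Hd p (fun ω => (U1 ω, (X ω, U2 ω))) :=
    Hd_perm p _ _ (fun t => (t.2.1, (t.1, t.2.2))) (fun t => (t.2.1, (t.1, t.2.2)))
      (fun _ => rfl) (fun _ => rfl)
  have R2 : Hd p (fun ω => ((X ω, U2 ω), Y1 ω)) = Hd p (fun ω => (Y1 ω, (X ω, U2 ω))) :=
    Hd_perm p _ _ (fun t => (t.2, t.1)) (fun t => (t.2, t.1)) (fun _ => rfl) (fun _ => rfl)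
  have R3 : Hd p (fun ω => (U1 ω, (X ω, U2 ω), Y1 ω))
      = Hd p (fun ω => (U1 ω, Y1 ω, (X ω, U2 ω))) :=
    Hd_perm p _ _ (fun t => (t.1, (t.2.2, t.2.1))) (fun t => (t.1, (t.2.2, t.2.1)))
      (fun _ => rfl) (fun _ => rfl)
  have R4 : Hd p (fun ω => ((U1 ω, Y1 ω), X ω)) = Hd p (fun ω => (U1 ω, Y1 ω, X ω)) :=
    Hd_perm p _ _ (fun t => ((t.1, t.2.1), t.2.2)) (fun t => (t.1.1, (t.1.2, t.2)))
      (fun _ => rfl) (fun _ => rfl)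
  have R5 : Hd p (fun ω => (U2 ω, X ω)) = Hd p (fun ω => (X ω, U2 ω)) :=
    Hd_perm p _ _ (fun t => (t.2, t.1)) (fun t => (t.2, t.1)) (fun _ => rfl) (fun _ => rfl)
  have R6 : Hd p (fun ω => ((U1 ω, Y1 ω), U2 ω, X ω))
      = Hd p (fun ω => (U1 ω, Y1 ω, (X ω, U2 ω))) :=
    Hd_perm p _ _ (fun t => ((t.1, t.2.1), (t.2.2.2, t.2.2.1)))
      (fun t => (t.1.1, (t.1.2, (t.2.2, t.2.1)))) (fun _ => rfl) (fun _ => rfl)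
  have R7 : Hd p (fun ω => (U2 ω, Y1 ω)) = Hd p (fun ω => (Y1 ω, U2 ω)) :=
    Hd_perm p _ _ (fun t => (t.2, t.1)) (fun t => (t.2, t.1)) (fun _ => rfl) (fun _ => rfl)
  have R8 : Hd p (fun ω => (U1 ω, U2 ω, Y1 ω)) = Hd p (fun ω => (U1 ω, Y1 ω, U2 ω)) :=
    Hd_perm p _ _ (fun t => (t.1, (t.2.2, t.2.1))) (fun t => (t.1, (t.2.2, t.2.1)))
      (fun _ => rfl) (fun _ => rfl)
  have R9 : Hd p (fun ω => (X ω, (Y1 ω, U2 ω))) = Hd p (fun ω => (Y1 ω, (X ω, U2 ω))) :=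
    Hd_perm p _ _ (fun t => (t.2.1, (t.1, t.2.2))) (fun t => (t.2.1, (t.1, t.2.2)))
      (fun _ => rfl) (fun _ => rfl)
  have R10 : Hd p (fun ω => (U1 ω, X ω, (Y1 ω, U2 ω)))
      = Hd p (fun ω => (U1 ω, Y1 ω, (X ω, U2 ω))) :=
    Hd_perm p _ _ (fun t => (t.1, (t.2.2.1, (t.2.1, t.2.2.2))))
      (fun t => (t.1, (t.2.2.1, (t.2.1, t.2.2.2)))) (fun _ => rfl) (fun _ => rfl)
  have R11 : Hd p (fun ω => (U1 ω, U2 ω, X ω)) = Hd p (fun ω => (U1 ω, (X ω, U2 ω))) :=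
    Hd_perm p _ _ (fun t => (t.1, (t.2.2, t.2.1))) (fun t => (t.1, (t.2.2, t.2.1)))
      (fun _ => rfl) (fun _ => rfl)
  have R12 : Hd p (fun ω => (Y1 ω, (X ω, U1 ω))) = Hd p (fun ω => (U1 ω, Y1 ω, X ω)) :=
    Hd_perm p _ _ (fun t => (t.2.1, (t.2.2, t.1))) (fun t => (t.2.2, (t.1, t.2.1)))
      (fun _ => rfl) (fun _ => rfl)
  have R13 : Hd p (fun ω => (U2 ω, (X ω, U1 ω))) = Hd p (fun ω => (U1 ω, (X ω, U2 ω))) :=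
    Hd_perm p _ _ (fun t => (t.2.2, (t.2.1, t.1))) (fun t => (t.2.2, (t.2.1, t.1)))
      (fun _ => rfl) (fun _ => rfl)
  have R14 : Hd p (fun ω => (Y1 ω, (U2 ω, (X ω, U1 ω))))
      = Hd p (fun ω => (U1 ω, Y1 ω, (X ω, U2 ω))) :=
    Hd_perm p _ _ (fun t => (t.2.1, (t.2.2.2, (t.2.2.1, t.1))))
      (fun s => (s.2.2.2, (s.1, (s.2.2.1, s.2.1)))) (fun _ => rfl) (fun _ => rfl)
  have R15 : Hd p (fun ω => (X ω, U1 ω)) = Hd p (fun ω => (U1 ω, X ω)) :=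
    Hd_perm p _ _ (fun t => (t.2, t.1)) (fun t => (t.2, t.1)) (fun _ => rfl) (fun _ => rfl)
  have R16 : Hd p (fun ω => (Y1 ω, (U2 ω, X ω))) = Hd p (fun ω => (Y1 ω, (X ω, U2 ω))) :=
    Hd_perm p _ _ (fun t => (t.1, (t.2.2, t.2.1))) (fun t => (t.1, (t.2.2, t.2.1)))
      (fun _ => rfl) (fun _ => rfl)
  have R17 : Hd p (fun ω => (U1 ω, (X ω, Y1 ω))) = Hd p (fun ω => (U1 ω, Y1 ω, X ω)) :=
    Hd_perm p _ _ (fun t => (t.1, (t.2.2, t.2.1))) (fun t => (t.1, (t.2.2, t.2.1)))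
      (fun _ => rfl) (fun _ => rfl)
  have R18 : Hd p (fun ω => (U2 ω, (X ω, Y1 ω))) = Hd p (fun ω => (Y1 ω, (X ω, U2 ω))) :=
    Hd_perm p _ _ (fun t => (t.2.2, (t.2.1, t.1))) (fun t => (t.2.2, (t.2.1, t.1)))
      (fun _ => rfl) (fun _ => rfl)
  have R19 : Hd p (fun ω => (U1 ω, (U2 ω, (X ω, Y1 ω))))
      = Hd p (fun ω => (U1 ω, Y1 ω, (X ω, U2 ω))) :=
    Hd_perm p _ _ (fun t => (t.1, (t.2.2.2, (t.2.2.1, t.2.1))))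
      (fun t => (t.1, (t.2.2.2, (t.2.2.1, t.2.1)))) (fun _ => rfl) (fun _ => rfl)
  have R20 : Hd p (fun ω => (X ω, Y1 ω)) = Hd p (fun ω => (Y1 ω, X ω)) :=
    Hd_perm p _ _ (fun t => (t.2, t.1)) (fun t => (t.2, t.1)) (fun _ => rfl) (fun _ => rfl)
  have nI1 := CMId_nonneg p hp hp1 U1 U2 Y1
  have nE1 := CMId_nonneg p hp hp1 U1 X (fun ω => (Y1 ω, U2 ω))
  have nE2 := CMId_nonneg p hp hp1 U1 U2 X
  have nF2 := CMId_nonneg p hp hp1 Y1 U2 (fun ω => (X ω, U1 ω))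
  have nF3 := CMId_nonneg p hp hp1 Y1 U2 X
  have nE3 := CMId_nonneg p hp hp1 U1 U2 (fun ω => (X ω, Y1 ω))
  simp only [CMId, CHd] at hM1 hM2 nI1 nE1 nE2 nF2 nF3 nE3 ⊢
  rw [R2, R3] at hM1
  rw [R4, R5, R6] at hM2
  rw [R7, R8] at nI1
  rw [R9, R10] at nE1
  rw [R5, R11] at nE2
  rw [R12, R13, R14, R15] at nF2
  rw [R5, R16] at nF3
  rw [R17, R18, R19, R20] at nE3
  rw [R1]
  linarith
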